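/- arXiv:2002.06808 — 3 statements merged into one kernel-verified Lean document; each statement's English description precedes it below -/
import Mathlib

section
/- Let K_t(r) be the Riccati iterates K₀(r) := Q, K_{t+1}(r) := Q + Aᵀ( γK_t(r) − (γ²/(γ bᵀK_t(r) b + r)) K_t(r) b bᵀ K_t(r) )A, and suppose that for every r > 0 the iterates K_t(r) converge entrywise as t → ∞ to a matrix K(r). Then for every x ∈ ℝ^d, the optimal cost map r ↦ J*_r(x) := xᵀK(r) x + (γ/(1−γ)) ∫ nᵀK(r) n dμ(n) is concave and nondecreasing on (0,∞). -/
open MeasureTheory Matrix Filter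

noncomputable section

/-- One step of the Riccati recursion with control penalty `r`:
`K ↦ Q + Aᵀ( γK − (γ²/(γ bᵀK b + r)) K b bᵀ K )A`. -/
def riccatiStep {d : ℕ} (A Q : Matrix (Fin d) (Fin d) ℝ) (b : Fin d → ℝ) (γ r : ℝ)
    (K : Matrix (Fin d) (Fin d) ℝ) : Matrix (Fin d) (Fin d) ℝ :=
  Q + Aᵀ * (γ • K - (γ ^ 2 / (γ * (b ⬝ᵥ K.mulVec b) + r)) • (K * vecMulVec b b * K)) * A

/-- The Riccati iterates `K_0(r) = Q`, `K_{t+1}(r) = riccatiStep K_t(r)`. -/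
def riccatiIter {d : ℕ} (A Q : Matrix (Fin d) (Fin d) ℝ) (b : Fin d → ℝ) (γ r : ℝ)
    (t : ℕ) : Matrix (Fin d) (Fin d) ℝ :=
  (riccatiStep A Q b γ r)^[t] Q

variable {d : ℕ}


lemma vvb_mulVec (b x : Fin d → ℝ) : (vecMulVec b b) *ᵥ x = (b ⬝ᵥ x) • b := by
  ext i
  simp only [vecMulVec_apply, mulVec, dotProduct, Pi.smul_apply, smul_eq_mul, Finset.sum_mul]
  exact Finset.sum_congr rfl (fun j _ => by ring)

lemma vvb_transpose (b : Fin d → ℝ) : (vecMulVec b b)ᵀ = vecMulVec b b := by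
  ext i j; simp [vecMulVec_apply, transpose_apply, mul_comm]

lemma symm_swap {K : Matrix (Fin d) (Fin d) ℝ} (hK : Kᵀ = K) (w b : Fin d → ℝ) :
    w ⬝ᵥ K *ᵥ b = b ⬝ᵥ K *ᵥ w := by
  rw [dotProduct_mulVec]
  conv_lhs => rw [← hK]
  rw [vecMul_transpose, dotProduct_comm]

lemma sandwich (A M : Matrix (Fin d) (Fin d) ℝ) (v : Fin d → ℝ) :
    v ⬝ᵥ (Aᵀ * M * A) *ᵥ v = (A *ᵥ v) ⬝ᵥ M *ᵥ (A *ᵥ v) := by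
  rw [Matrix.mul_assoc, ← mulVec_mulVec, dotProduct_mulVec, vecMul_transpose, ← mulVec_mulVec]

lemma qf_step_expand (A Q K : Matrix (Fin d) (Fin d) ℝ) (b : Fin d → ℝ) (γ r : ℝ) (v : Fin d → ℝ)
    (hK : Kᵀ = K) (ha : γ * (b ⬝ᵥ K *ᵥ b) + r ≠ 0) (u : ℝ) :
    v ⬝ᵥ (riccatiStep A Q b γ r K) *ᵥ v =
      v ⬝ᵥ Q *ᵥ v + r * u ^ 2
        + γ * ((A *ᵥ v + u • b) ⬝ᵥ K *ᵥ (A *ᵥ v + u • b))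
        - ((γ * (b ⬝ᵥ K *ᵥ b) + r) * u + γ * (b ⬝ᵥ K *ᵥ (A *ᵥ v))) ^ 2
            / (γ * (b ⬝ᵥ K *ᵥ b) + r) := by
  set w := A *ᵥ v with hw
  have h1 : v ⬝ᵥ (riccatiStep A Q b γ r K) *ᵥ v =
      v ⬝ᵥ Q *ᵥ v + γ * (w ⬝ᵥ K *ᵥ w)
        - γ ^ 2 / (γ * (b ⬝ᵥ K *ᵥ b) + r) * (b ⬝ᵥ K *ᵥ w) ^ 2 := by
    rw [riccatiStep, add_mulVec, dotProduct_add, sandwich, sub_mulVec, dotProduct_sub,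
      Matrix.mul_assoc, smul_mulVec, dotProduct_smul, smul_mulVec, dotProduct_smul,
      ← mulVec_mulVec, ← mulVec_mulVec, vvb_mulVec, Matrix.mulVec_smul, dotProduct_smul,
      symm_swap hK w b]
    push_cast [smul_eq_mul]
    ring
  have h2 : (w + u • b) ⬝ᵥ K *ᵥ (w + u • b) =
      w ⬝ᵥ K *ᵥ w + 2 * u * (b ⬝ᵥ K *ᵥ w) + u ^ 2 * (b ⬝ᵥ K *ᵥ b) := by
    rw [Matrix.mulVec_add, dotProduct_add, add_dotProduct, add_dotProduct, Matrix.mulVec_smul,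
      dotProduct_smul, dotProduct_smul, smul_dotProduct, smul_dotProduct,
      symm_swap hK w b]
    push_cast [smul_eq_mul]
    ring
  rw [h1, h2]
  field_simp
  ring

lemma step_symm (A Q K : Matrix (Fin d) (Fin d) ℝ) (b : Fin d → ℝ) (γ r : ℝ)
    (hQ : Qᵀ = Q) (hK : Kᵀ = K) :
    (riccatiStep A Q b γ r K)ᵀ = riccatiStep A Q b γ r K := by
  simp [riccatiStep, transpose_add, transpose_mul, transpose_sub, transpose_smul,
    transpose_transpose, hQ, hK, vvb_transpose, Matrix.mul_assoc]

lemma riccati_main (A Q : Matrix (Fin d) (Fin d) ℝ) (b : Fin d → ℝ)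
    (hQs : Qᵀ = Q) (hQp : ∀ v : Fin d → ℝ, 0 ≤ v ⬝ᵥ Q *ᵥ v)
    (γ : ℝ) (hγ0 : 0 < γ) : ∀ t : ℕ,
    (∀ r : ℝ, 0 < r → (riccatiIter A Q b γ r t)ᵀ = riccatiIter A Q b γ r t
        ∧ ∀ v : Fin d → ℝ, 0 ≤ v ⬝ᵥ (riccatiIter A Q b γ r t) *ᵥ v)
    ∧ (∀ v : Fin d → ℝ,
        ConcaveOn ℝ (Set.Ioi (0:ℝ)) (fun r => v ⬝ᵥ (riccatiIter A Q b γ r t) *ᵥ v)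
        ∧ MonotoneOn (fun r => v ⬝ᵥ (riccatiIter A Q b γ r t) *ᵥ v) (Set.Ioi (0:ℝ))) := by
  intro t
  induction t with
  | zero =>
      refine ⟨fun r hr => ⟨hQs, hQp⟩, fun v => ⟨?_, ?_⟩⟩
      · simpa [riccatiIter] using
          concaveOn_const (v ⬝ᵥ Q *ᵥ v) (convex_Ioi (0:ℝ))
      · simpa [riccatiIter] using
          (monotoneOn_const :
            MonotoneOn (fun _ : ℝ => v ⬝ᵥ Q *ᵥ v) (Set.Ioi (0:ℝ)))
  | succ t ih =>
      obtain ⟨ihp, ihc⟩ := ih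
      have hstep : ∀ r : ℝ, riccatiIter A Q b γ r (t+1)
          = riccatiStep A Q b γ r (riccatiIter A Q b γ r t) := by
        intro r
        rw [riccatiIter, Function.iterate_succ_apply', riccatiIter]
      -- positivity of the denominator
      have hapos : ∀ r : ℝ, 0 < r →
          0 < γ * (b ⬝ᵥ (riccatiIter A Q b γ r t) *ᵥ b) + r := by
        intro r hr
        have := (ihp r hr).2 b
        nlinarith
      -- the equality at the optimal u and the inequality at arbitrary u
      have key_le : ∀ (r : ℝ), 0 < r → ∀ (v : Fin d → ℝ) (u : ℝ),
          v ⬝ᵥ (riccatiIter A Q b γ r (t+1)) *ᵥ v ≤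
            v ⬝ᵥ Q *ᵥ v + r * u ^ 2
              + γ * ((A *ᵥ v + u • b) ⬝ᵥ (riccatiIter A Q b γ r t) *ᵥ (A *ᵥ v + u • b)) := by
        intro r hr v u
        rw [hstep r, qf_step_expand A Q _ b γ r v (ihp r hr).1 (hapos r hr).ne' u]
        have h := div_nonneg (sq_nonneg ((γ * (b ⬝ᵥ (riccatiIter A Q b γ r t) *ᵥ b) + r) * u
          + γ * (b ⬝ᵥ (riccatiIter A Q b γ r t) *ᵥ (A *ᵥ v))))
          (hapos r hr).le
        linarith
      have key_eq : ∀ (r : ℝ), 0 < r → ∀ (v : Fin d → ℝ),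
          v ⬝ᵥ (riccatiIter A Q b γ r (t+1)) *ᵥ v =
            v ⬝ᵥ Q *ᵥ v
              + r * (-(γ * (b ⬝ᵥ (riccatiIter A Q b γ r t) *ᵥ (A *ᵥ v)))
                  / (γ * (b ⬝ᵥ (riccatiIter A Q b γ r t) *ᵥ b) + r)) ^ 2
              + γ * ((A *ᵥ v + (-(γ * (b ⬝ᵥ (riccatiIter A Q b γ r t) *ᵥ (A *ᵥ v)))
                  / (γ * (b ⬝ᵥ (riccatiIter A Q b γ r t) *ᵥ b) + r)) • b)
                ⬝ᵥ (riccatiIter A Q b γ r t) *ᵥ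
                  (A *ᵥ v + (-(γ * (b ⬝ᵥ (riccatiIter A Q b γ r t) *ᵥ (A *ᵥ v)))
                  / (γ * (b ⬝ᵥ (riccatiIter A Q b γ r t) *ᵥ b) + r)) • b)) := by
        intro r hr v
        rw [hstep r, qf_step_expand A Q _ b γ r v (ihp r hr).1 (hapos r hr).ne' _]
        have hz : (γ * (b ⬝ᵥ (riccatiIter A Q b γ r t) *ᵥ b) + r)
            * (-(γ * (b ⬝ᵥ (riccatiIter A Q b γ r t) *ᵥ (A *ᵥ v)))
                  / (γ * (b ⬝ᵥ (riccatiIter A Q b γ r t) *ᵥ b) + r))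
            + γ * (b ⬝ᵥ (riccatiIter A Q b γ r t) *ᵥ (A *ᵥ v)) = 0 := by
          have ha := (hapos r hr).ne'
          field_simp
          ring
        rw [hz]
        simp
      refine ⟨fun r hr => ⟨?_, ?_⟩, fun v => ⟨⟨convex_Ioi 0, ?_⟩, ?_⟩⟩
      · rw [hstep r]; exact step_symm A Q _ b γ r hQs (ihp r hr).1
      · intro v
        rw [key_eq r hr v]
        have h1 := hQp v
        have h2 := (ihp r hr).2 (A *ᵥ v + (-(γ * (b ⬝ᵥ (riccatiIter A Q b γ r t) *ᵥ (A *ᵥ v)))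
                  / (γ * (b ⬝ᵥ (riccatiIter A Q b γ r t) *ᵥ b) + r)) • b)
        have h3 := sq_nonneg (-(γ * (b ⬝ᵥ (riccatiIter A Q b γ r t) *ᵥ (A *ᵥ v)))
                  / (γ * (b ⬝ᵥ (riccatiIter A Q b γ r t) *ᵥ b) + r))
        nlinarith
      · -- concavity
        intro x hx y hy α β hα hβ hab
        simp only [smul_eq_mul]
        have hρ : (0:ℝ) < α * x + β * y := by
          have := (convex_Ioi (0:ℝ)) hx hy hα hβ hab
          simpa using this
        set ρ := α * x + β * y with hρdef
        set u₀ := -(γ * (b ⬝ᵥ (riccatiIter A Q b γ ρ t) *ᵥ (A *ᵥ v)))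
                  / (γ * (b ⬝ᵥ (riccatiIter A Q b γ ρ t) *ᵥ b) + ρ) with hu₀
        set z := A *ᵥ v + u₀ • b with hz
        have heq := key_eq ρ hρ v
        have hlex := key_le x (Set.mem_Ioi.mp hx) v u₀
        have hley := key_le y (Set.mem_Ioi.mp hy) v u₀
        have hconc := (ihc z).1.2 hx hy hα hβ hab
        simp only [smul_eq_mul] at hconc
        rw [← hρdef] at hconc
        rw [← hu₀, ← hz] at heq
        rw [← hz] at hlex hley
        have hcQ : α * (v ⬝ᵥ Q *ᵥ v) + β * (v ⬝ᵥ Q *ᵥ v) = v ⬝ᵥ Q *ᵥ v := by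
          rw [← add_mul, hab, one_mul]
        have hu : α * (x * u₀ ^ 2) + β * (y * u₀ ^ 2) = ρ * u₀ ^ 2 := by
          rw [hρdef]; ring
        have P1 := mul_le_mul_of_nonneg_left hlex hα
        have P2 := mul_le_mul_of_nonneg_left hley hβ
        have P3 := mul_le_mul_of_nonneg_left hconc hγ0.le
        nlinarith [P1, P2, P3, hcQ, hu, heq]
      · -- monotonicity
        intro x hx y hy hxy
        set u₀ := -(γ * (b ⬝ᵥ (riccatiIter A Q b γ y t) *ᵥ (A *ᵥ v)))
                  / (γ * (b ⬝ᵥ (riccatiIter A Q b γ y t) *ᵥ b) + y) with hu₀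
        set z := A *ᵥ v + u₀ • b with hz
        have heq := key_eq y (Set.mem_Ioi.mp hy) v
        have hlex := key_le x (Set.mem_Ioi.mp hx) v u₀
        have hmono := (ihc z).2 hx hy hxy
        simp only [] at hmono
        rw [← hu₀, ← hz] at heq
        rw [← hz] at hlex
        have P3 := mul_le_mul_of_nonneg_left hmono hγ0.le
        have P4 := mul_le_mul_of_nonneg_right hxy (sq_nonneg u₀)
        linarith [P3, P4, heq, hlex]



/-- If for every `r > 0` the Riccati iterates `K_t(r)` converge entrywise to `K(r)`, then for
every `x` the optimal-cost map `r ↦ J*_r(x) = xᵀK(r)x + (γ/(1−γ)) ∫ nᵀK(r)n dμ` is concave and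
nondecreasing on `(0,∞)`. -/
theorem optimal_cost_concave_nondecreasing_in_control_penalty
    (d : ℕ) (hd : 1 ≤ d)
    (A Q : Matrix (Fin d) (Fin d) ℝ) (b : Fin d → ℝ) (hQ : Q.PosSemidef)
    (γ : ℝ) (hγ : γ ∈ Set.Ioo (0 : ℝ) 1)
    (μ : Measure (Fin d → ℝ)) [IsProbabilityMeasure μ]
    (hmean : ∀ i, ∫ n, n i ∂μ = 0)
    (hmom : Integrable (fun n => ∑ i, (n i) ^ 2) μ)
    (K : ℝ → Matrix (Fin d) (Fin d) ℝ)
    (hconv : ∀ r > (0 : ℝ), ∀ i j : Fin d,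
      Tendsto (fun t => riccatiIter A Q b γ r t i j) atTop (nhds (K r i j))) :
    ∀ x : Fin d → ℝ,
      ConcaveOn ℝ (Set.Ioi (0 : ℝ))
        (fun r => x ⬝ᵥ (K r).mulVec x + γ / (1 - γ) * ∫ n, n ⬝ᵥ (K r).mulVec n ∂μ) ∧
      MonotoneOn
        (fun r => x ⬝ᵥ (K r).mulVec x + γ / (1 - γ) * ∫ n, n ⬝ᵥ (K r).mulVec n ∂μ)
        (Set.Ioi (0 : ℝ)) := by
  obtain ⟨hγ0, hγ1⟩ := hγ
  have hQs : Qᵀ = Q := by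
    have := hQ.1
    simpa [Matrix.IsHermitian] using this
  have hQp : ∀ v : Fin d → ℝ, 0 ≤ v ⬝ᵥ Q *ᵥ v := fun v => by
    simpa using hQ.dotProduct_mulVec_nonneg v
  have main := riccati_main A Q b hQs hQp γ hγ0
  -- limits of quadratic forms
  have hlim : ∀ (v : Fin d → ℝ) (r : ℝ), r ∈ Set.Ioi (0:ℝ) →
      Tendsto (fun t => v ⬝ᵥ (riccatiIter A Q b γ r t) *ᵥ v) atTop
        (nhds (v ⬝ᵥ (K r) *ᵥ v)) := by
    intro v r hr
    simp only [dotProduct, mulVec]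
    exact tendsto_finset_sum _ fun i _ =>
      ((tendsto_finset_sum _ fun j _ =>
        (hconv r (Set.mem_Ioi.mp hr) i j).mul_const (v j)).const_mul (v i))
  have hKconc : ∀ v : Fin d → ℝ,
      ConcaveOn ℝ (Set.Ioi (0:ℝ)) (fun r => v ⬝ᵥ (K r) *ᵥ v) := by
    intro v
    refine ⟨convex_Ioi 0, fun p hp q hq α β hα hβ hab => ?_⟩
    have hρ : α • p + β • q ∈ Set.Ioi (0:ℝ) := (convex_Ioi 0) hp hq hα hβ hab
    simp only [smul_eq_mul] at hρ ⊢
    refine le_of_tendsto_of_tendsto'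
      (((hlim v p hp).const_mul α).add ((hlim v q hq).const_mul β))
      (hlim v _ hρ) (fun t => ?_)
    have := ((main t).2 v).1.2 hp hq hα hβ hab
    simpa [smul_eq_mul] using this
  have hKmono : ∀ v : Fin d → ℝ,
      MonotoneOn (fun r => v ⬝ᵥ (K r) *ᵥ v) (Set.Ioi (0:ℝ)) := by
    intro v p hp q hq hpq
    exact le_of_tendsto_of_tendsto' (hlim v p hp) (hlim v q hq)
      (fun t => ((main t).2 v).2 hp hq hpq)
  -- integrability
  have hij : ∀ i j : Fin d, Integrable (fun n => n i * n j) μ := by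
    intro i j
    refine (hmom.const_mul 2).mono
      ((measurable_pi_apply i).mul (measurable_pi_apply j)).aestronglyMeasurable
      (Filter.Eventually.of_forall fun n => ?_)
    have h1 : n i ^ 2 ≤ ∑ k, n k ^ 2 :=
      Finset.single_le_sum (fun k _ => sq_nonneg (n k)) (Finset.mem_univ i)
    have h2 : n j ^ 2 ≤ ∑ k, n k ^ 2 :=
      Finset.single_le_sum (fun k _ => sq_nonneg (n k)) (Finset.mem_univ j)
    have hnn : (0:ℝ) ≤ ∑ k, n k ^ 2 := Finset.sum_nonneg fun k _ => sq_nonneg _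
    simp only [Real.norm_eq_abs]
    have hr : |2 * ∑ k, n k ^ 2| = 2 * ∑ k, n k ^ 2 := abs_of_nonneg (by linarith)
    rw [hr, abs_mul]
    nlinarith [abs_nonneg (n i), abs_nonneg (n j), sq_abs (n i), sq_abs (n j),
      sq_nonneg (|n i| - |n j|)]
  have hint : ∀ M : Matrix (Fin d) (Fin d) ℝ,
      Integrable (fun n => n ⬝ᵥ M *ᵥ n) μ := by
    intro M
    have hrw : (fun n : Fin d → ℝ => n ⬝ᵥ M *ᵥ n)
        = fun n => ∑ i, ∑ j, M i j * (n i * n j) := by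
      funext n
      simp only [dotProduct, mulVec, Finset.mul_sum]
      exact Finset.sum_congr rfl fun i _ => Finset.sum_congr rfl fun j _ => by ring
    rw [hrw]
    exact integrable_finset_sum _ fun i _ =>
      integrable_finset_sum _ fun j _ => (hij i j).const_mul _
  have hc : (0:ℝ) ≤ γ / (1 - γ) := div_nonneg hγ0.le (by linarith)
  intro x
  constructor
  · refine ⟨convex_Ioi 0, fun p hp q hq α β hα hβ hab => ?_⟩
    have hρ : α • p + β • q ∈ Set.Ioi (0:ℝ) := (convex_Ioi 0) hp hq hα hβ hab
    simp only [smul_eq_mul] at hρ ⊢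
    have h1 := (hKconc x).2 hp hq hα hβ hab
    simp only [smul_eq_mul] at h1
    have hFc : α * (∫ n, n ⬝ᵥ (K p) *ᵥ n ∂μ) + β * (∫ n, n ⬝ᵥ (K q) *ᵥ n ∂μ)
        ≤ ∫ n, n ⬝ᵥ (K (α * p + β * q)) *ᵥ n ∂μ := by
      have he : ∫ n, (α * (n ⬝ᵥ (K p) *ᵥ n) + β * (n ⬝ᵥ (K q) *ᵥ n)) ∂μ
          = α * (∫ n, n ⬝ᵥ (K p) *ᵥ n ∂μ) + β * (∫ n, n ⬝ᵥ (K q) *ᵥ n ∂μ) := by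
        rw [integral_add ((hint _).const_mul α) ((hint _).const_mul β),
          integral_const_mul, integral_const_mul]
      rw [← he]
      refine integral_mono (((hint _).const_mul α).add ((hint _).const_mul β))
        (hint _) (fun n => ?_)
      have := (hKconc n).2 hp hq hα hβ hab
      simpa [smul_eq_mul] using this
    have h2 := mul_le_mul_of_nonneg_left hFc hc
    linarith
  · intro p hp q hq hpq
    have h1 := hKmono x hp hq hpq
    have hF : (∫ n, n ⬝ᵥ (K p) *ᵥ n ∂μ) ≤ ∫ n, n ⬝ᵥ (K q) *ᵥ n ∂μ :=
      integral_mono (hint _) (hint _) (fun n => hKmono n hp hq hpq)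
    have h2 := mul_le_mul_of_nonneg_left hF hc
    simp only [] at h1 ⊢
    linarith

end
end

section
/- For each λ > 0 let K_λ be a symmetric positive semidefinite solution of the discrete algebraic Riccati equation with penalty λ and set f(λ) := x₀ᵀK_λ x₀ + (γ/(1−γ)) ∫ nᵀK_λ n dμ(n). Assume γ^T E[x_TᵀK_λ x_T] → 0 as T → ∞ for every λ > 0, and that the volatility V := Σ_{t=0}^∞ γ^t E[u_t²] and the efficiency E := −Σ_{t=0}^∞ γ^t E[x_tᵀQ x_t] are both finite. Then for every λ > 0, E ≤ λ V − f(λ); equivalently E ≤ −sup_{λ>0}( f(λ) − λ V ). In other words, the (volatility, efficiency) pair of every admissible adapted control lies below the Pareto boundary of the capacity region: no policy can simultaneously achieve low volatility and high efficiency (a "no free lunch" theorem). -/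
open MeasureTheory Matrix Filter ProbabilityTheory

noncomputable section

/-- The value `f(λ) = x₀ᵀK_λ x₀ + (γ/(1−γ)) ∫ nᵀK_λ n dμ` of the Lagrangian-relaxed problem. -/
def dualVal {d : ℕ} (γ : ℝ) (μ : Measure (Fin d → ℝ)) (x₀ : Fin d → ℝ)
    (K : Matrix (Fin d) (Fin d) ℝ) : ℝ :=
  x₀ ⬝ᵥ K.mulVec x₀ + γ / (1 - γ) * ∫ n, n ⬝ᵥ K.mulVec n ∂μ

set_option linter.unusedSectionVars false

section Aux

variable {Ω : Type} [MeasurableSpace Ω] {P : Measure Ω}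

lemma measurable_recstep {d : ℕ} {Ω : Type} {mF : MeasurableSpace Ω}
    (A : Matrix (Fin d) (Fin d) ℝ) (b : Fin d → ℝ) {xf nf : Ω → Fin d → ℝ} {uf : Ω → ℝ}
    (hx : Measurable xf) (hu : Measurable uf) (hn : Measurable nf) :
    Measurable (fun ω => A.mulVec (xf ω) + uf ω • b + nf ω) := by
  refine Measurable.add (Measurable.add ?_ ?_) hn
  · refine measurable_pi_iff.mpr fun i => ?_
    simp only [Matrix.mulVec, dotProduct]
    exact Finset.measurable_sum _ fun j _ => ((measurable_pi_apply j).comp hx).const_mul _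
  · refine measurable_pi_iff.mpr fun i => ?_
    simp only [Pi.smul_apply, smul_eq_mul]
    exact hu.mul_const _


lemma riccati_quad_le {d : ℕ} (A Q K : Matrix (Fin d) (Fin d) ℝ) (b : Fin d → ℝ) (γ lam : ℝ)
    (hγ0 : 0 < γ) (hlam : 0 < lam) (hpsd : K.PosSemidef)
    (hEq : K = riccatiStep A Q b γ lam K) (v : Fin d → ℝ) (c : ℝ) :
    v ⬝ᵥ K.mulVec v ≤ v ⬝ᵥ Q.mulVec v + lam * c ^ 2
      + γ * ((A.mulVec v + c • b) ⬝ᵥ K.mulVec (A.mulVec v + c • b)) := by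
  have hsym : Kᵀ = K := by
    have h := hpsd.1
    ext i j
    simpa using congrFun (congrFun h i) j
  have hKij : ∀ i j, K i j = K j i := fun i j => by simpa using congrFun (congrFun hsym j) i
  have hb : 0 ≤ b ⬝ᵥ K.mulVec b := by simpa using hpsd.dotProduct_mulVec_nonneg b
  set y := A.mulVec v with hy
  set s := γ * (b ⬝ᵥ K.mulVec b) + lam with hs
  have hspos : 0 < s := by positivity
  have hquad : v ⬝ᵥ K.mulVec v = v ⬝ᵥ Q.mulVec v
      + γ * (y ⬝ᵥ K.mulVec y) - (γ ^ 2 / s) * (b ⬝ᵥ K.mulVec y) ^ 2 := by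
    conv_lhs => rw [hEq]
    rw [riccatiStep, Matrix.add_mulVec, dotProduct_add]
    rw [← Matrix.mulVec_mulVec, ← Matrix.mulVec_mulVec, Matrix.dotProduct_mulVec v Aᵀ,
      Matrix.vecMul_transpose, Matrix.sub_mulVec, dotProduct_sub,
      Matrix.smul_mulVec, dotProduct_smul, Matrix.smul_mulVec, dotProduct_smul]
    have hvmv : (vecMulVec b b).mulVec (K.mulVec y) = (b ⬝ᵥ K.mulVec y) • b := by
      funext i
      simp [vecMulVec_apply, Matrix.mulVec, dotProduct, Finset.mul_sum, mul_comm, mul_left_comm,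
        mul_assoc]
    rw [← Matrix.mulVec_mulVec, ← Matrix.mulVec_mulVec, hvmv, Matrix.mulVec_smul, dotProduct_smul]
    have hsymdot : y ⬝ᵥ K.mulVec b = b ⬝ᵥ K.mulVec y := by
      simp only [dotProduct, Matrix.mulVec, Finset.mul_sum]
      rw [Finset.sum_comm]
      exact Finset.sum_congr rfl fun i _ =>
        Finset.sum_congr rfl fun j _ => by rw [hKij j i]; ring
    rw [hsymdot]
    simp only [smul_eq_mul]
    ring
  have hexp : (y + c • b) ⬝ᵥ K.mulVec (y + c • b)
      = y ⬝ᵥ K.mulVec y + 2 * c * (b ⬝ᵥ K.mulVec y) + c ^ 2 * (b ⬝ᵥ K.mulVec b) := by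
    have hsymdot : y ⬝ᵥ K.mulVec b = b ⬝ᵥ K.mulVec y := by
      simp only [dotProduct, Matrix.mulVec, Finset.mul_sum]
      rw [Finset.sum_comm]
      exact Finset.sum_congr rfl fun i _ =>
        Finset.sum_congr rfl fun j _ => by rw [hKij j i]; ring
    rw [Matrix.mulVec_add, Matrix.mulVec_smul, dotProduct_add, add_dotProduct, add_dotProduct,
      dotProduct_smul, dotProduct_smul, smul_dotProduct, smul_dotProduct, hsymdot]
    simp only [smul_eq_mul]
    ring
  rw [hquad, hexp]
  set p := b ⬝ᵥ K.mulVec y with hp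
  have key : 0 ≤ lam * c ^ 2 + 2 * γ * c * p + γ * (c ^ 2 * (b ⬝ᵥ K.mulVec b))
      + γ ^ 2 / s * p ^ 2 := by
    have h3 : lam * c ^ 2 + 2 * γ * c * p + γ * (c ^ 2 * (b ⬝ᵥ K.mulVec b))
        + γ ^ 2 / s * p ^ 2 = (s * c + γ * p) ^ 2 / s := by
      rw [hs]; field_simp; ring
    rw [h3]; positivity
  nlinarith [key]

variable {Ω : Type} [MeasurableSpace Ω] {P : Measure Ω}

lemma sq_int_mul {f g : Ω → ℝ} (hf : AEStronglyMeasurable f P) (hg : AEStronglyMeasurable g P)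
    (hf2 : Integrable (fun ω => f ω ^ 2) P) (hg2 : Integrable (fun ω => g ω ^ 2) P) :
    Integrable (fun ω => f ω * g ω) P := by
  refine Integrable.mono' (hf2.add hg2) (hf.mul hg) (ae_of_all _ fun ω => ?_)
  simp only [Pi.add_apply]
  rw [Real.norm_eq_abs, abs_mul]
  nlinarith [sq_nonneg (|f ω| - |g ω|), sq_abs (f ω), sq_abs (g ω),
    abs_nonneg (f ω), abs_nonneg (g ω)]

lemma bilin_eq {d : ℕ} (M : Matrix (Fin d) (Fin d) ℝ) (f g : Ω → Fin d → ℝ) :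
    (fun ω => f ω ⬝ᵥ M.mulVec (g ω)) = fun ω => ∑ i, ∑ j, M i j * (f ω i * g ω j) := by
  funext ω
  simp only [dotProduct, Matrix.mulVec, Finset.mul_sum]
  exact Finset.sum_congr rfl fun i _ => Finset.sum_congr rfl fun j _ => by ring

lemma integrable_bilin {d : ℕ} (M : Matrix (Fin d) (Fin d) ℝ) (f g : Ω → Fin d → ℝ)
    (hmul : ∀ i j, Integrable (fun ω => f ω i * g ω j) P) :
    Integrable (fun ω => f ω ⬝ᵥ M.mulVec (g ω)) P := by
  rw [bilin_eq]
  exact integrable_finset_sum _ fun i _ => integrable_finset_sum _ fun j _ =>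
    (hmul i j).const_mul _

lemma integral_bilin {d : ℕ} (M : Matrix (Fin d) (Fin d) ℝ) (f g : Ω → Fin d → ℝ)
    (hmul : ∀ i j, Integrable (fun ω => f ω i * g ω j) P) :
    ∫ ω, f ω ⬝ᵥ M.mulVec (g ω) ∂P = ∑ i, ∑ j, M i j * ∫ ω, f ω i * g ω j ∂P := by
  rw [bilin_eq]
  refine (integral_finset_sum _ fun i _ => integrable_finset_sum _ fun j _ => (hmul i j).const_mul _).trans ?_
  exact Finset.sum_congr rfl fun i _ => by
    refine (integral_finset_sum _ fun j _ => (hmul i j).const_mul _).trans ?_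
    exact Finset.sum_congr rfl fun j _ => integral_const_mul _ _

lemma measurable_quad {d : ℕ} (M : Matrix (Fin d) (Fin d) ℝ) :
    Measurable (fun v : Fin d → ℝ => v ⬝ᵥ M.mulVec v) := by
  simp only [dotProduct, Matrix.mulVec]
  exact Finset.measurable_sum _ fun i _ => (measurable_pi_apply i).mul
    (Finset.measurable_sum _ fun j _ => (measurable_pi_apply j).const_mul _)

end Aux

/-- "No free lunch" theorem: along any admissible adapted control with finite volatility
`V = Σ_t γ^t E[u_t²]` and finite efficiency `E = −Σ_t γ^t E[x_tᵀQ x_t]`, one has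
`E ≤ λV − f(λ)` for every `λ > 0`; equivalently `E ≤ −sup_{λ>0}(f(λ) − λV)`, i.e. the
(volatility, efficiency) pair of every admissible policy lies below the Pareto boundary of the
capacity region. -/
theorem no_free_lunch
    (d : ℕ) (hd : 1 ≤ d)
    (A Q : Matrix (Fin d) (Fin d) ℝ) (b : Fin d → ℝ) (hQ : Q.PosSemidef)
    (γ : ℝ) (hγ : γ ∈ Set.Ioo (0 : ℝ) 1)
    (μ : Measure (Fin d → ℝ)) [IsProbabilityMeasure μ]
    (hmean : ∀ i, ∫ n, n i ∂μ = 0)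
    (hmom : Integrable (fun n => ∑ i, (n i) ^ 2) μ)
    (K : ℝ → Matrix (Fin d) (Fin d) ℝ)
    (hK : ∀ lam > (0 : ℝ), (K lam).PosSemidef ∧ K lam = riccatiStep A Q b γ lam (K lam))
    (Ω : Type) [mΩ : MeasurableSpace Ω] (P : Measure Ω) [IsProbabilityMeasure P]
    (F : ℕ → MeasurableSpace Ω) (hFmono : Monotone F) (hFle : ∀ t, F t ≤ mΩ)
    (noise : ℕ → Ω → (Fin d → ℝ))
    (hnmeas : ∀ t, Measurable (noise t))
    (hlaw : ∀ t, Measure.map (noise t) P = μ)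
    (hnindep : ∀ t, Indep (MeasurableSpace.comap (noise t) inferInstance) (F t) P)
    (hnadapted : ∀ t, Measurable[F (t + 1)] (noise t))
    (x₀ : Fin d → ℝ)
    (u : ℕ → Ω → ℝ)
    (humeas : ∀ t, Measurable[F t] (u t))
    (huint : ∀ t, Integrable (fun ω => (u t ω) ^ 2) P)
    (x : ℕ → Ω → (Fin d → ℝ))
    (hx0 : x 0 = fun _ => x₀)
    (hxrec : ∀ t ω, x (t + 1) ω = A.mulVec (x t ω) + (u t ω) • b + noise t ω)
    (hxint : ∀ t, Integrable (fun ω => ∑ i, (x t ω i) ^ 2) P)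
    (htrans : ∀ lam > (0 : ℝ),
      Tendsto (fun T => γ ^ T * ∫ ω, (x T ω) ⬝ᵥ (K lam).mulVec (x T ω) ∂P)
        atTop (nhds 0))
    (hVsum : Summable fun t => γ ^ t * ∫ ω, (u t ω) ^ 2 ∂P)
    (hEsum : Summable fun t => γ ^ t * ∫ ω, (x t ω) ⬝ᵥ Q.mulVec (x t ω) ∂P) :
    (∀ lam > (0 : ℝ),
      -(∑' t : ℕ, γ ^ t * ∫ ω, (x t ω) ⬝ᵥ Q.mulVec (x t ω) ∂P) ≤
        lam * (∑' t : ℕ, γ ^ t * ∫ ω, (u t ω) ^ 2 ∂P) - dualVal γ μ x₀ (K lam)) ∧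
    -(∑' t : ℕ, γ ^ t * ∫ ω, (x t ω) ⬝ᵥ Q.mulVec (x t ω) ∂P) ≤
      -(⨆ lam : Set.Ioi (0 : ℝ),
        (dualVal γ μ x₀ (K lam.1) -
          lam.1 * ∑' t : ℕ, γ ^ t * ∫ ω, (u t ω) ^ 2 ∂P)) := by
  obtain ⟨hγ0, hγ1⟩ := hγ
  set Veff : ℝ := ∑' t : ℕ, γ ^ t * ∫ ω, (u t ω) ^ 2 ∂P with hVdef
  set Eff : ℝ := ∑' t : ℕ, γ ^ t * ∫ ω, (x t ω) ⬝ᵥ Q.mulVec (x t ω) ∂P with hEdef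
  -- measurability of the state process
  have hxmeasF : ∀ t, Measurable[F t] (x t) := by
    intro t
    induction t with
    | zero => rw [hx0]; exact measurable_const
    | succ t ih =>
      have hfun : x (t + 1) = fun ω => A.mulVec (x t ω) + u t ω • b + noise t ω :=
        funext (hxrec t)
      rw [hfun]
      have hxm : Measurable[F (t + 1)] (x t) := ih.mono (hFmono (Nat.le_succ t)) le_rfl
      have hum : Measurable[F (t + 1)] (u t) := (humeas t).mono (hFmono (Nat.le_succ t)) le_rfl
      exact measurable_recstep A b hxm hum (hnadapted t)
  have hxmeas : ∀ t, Measurable (x t) := fun t => (hxmeasF t).mono (hFle t) le_rfl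
  have humeasM : ∀ t, Measurable (u t) := fun t => (humeas t).mono (hFle t) le_rfl
  have hxi : ∀ t i, Measurable fun ω => x t ω i := fun t i =>
    (measurable_pi_apply i).comp (hxmeas t)
  have hni : ∀ t i, Measurable fun ω => noise t ω i := fun t i =>
    (measurable_pi_apply i).comp (hnmeas t)
  -- square integrability of components
  have hxsq : ∀ t i, Integrable (fun ω => (x t ω i) ^ 2) P := by
    intro t i
    refine (hxint t).mono' ((hxi t i).pow_const 2).aestronglyMeasurable
      (ae_of_all _ fun ω => ?_)
    rw [Real.norm_eq_abs, abs_of_nonneg (sq_nonneg _)]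
    exact Finset.single_le_sum (f := fun j => (x t ω j) ^ 2) (fun j _ => sq_nonneg _)
      (Finset.mem_univ i)
  have hnsqsum : ∀ t, Integrable (fun ω => ∑ i, (noise t ω i) ^ 2) P := by
    intro t
    have h1 : AEStronglyMeasurable (fun n : Fin d → ℝ => ∑ i, (n i) ^ 2)
        (Measure.map (noise t) P) :=
      (Finset.measurable_sum _ fun i _ => (measurable_pi_apply i).pow_const 2).aestronglyMeasurable
    have h2 := (integrable_map_measure h1 (hnmeas t).aemeasurable).mp (by rw [hlaw t]; exact hmom)
    simpa [Function.comp_def] using h2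
  have hnsq : ∀ t i, Integrable (fun ω => (noise t ω i) ^ 2) P := by
    intro t i
    refine (hnsqsum t).mono' ((hni t i).pow_const 2).aestronglyMeasurable
      (ae_of_all _ fun ω => ?_)
    rw [Real.norm_eq_abs, abs_of_nonneg (sq_nonneg _)]
    exact Finset.single_le_sum (f := fun j => (noise t ω j) ^ 2) (fun j _ => sq_nonneg _)
      (Finset.mem_univ i)
  -- the auxiliary process Y
  set Y : ℕ → Ω → (Fin d → ℝ) := fun t ω => A.mulVec (x t ω) + u t ω • b with hYdef
  have hxY : ∀ t ω, x (t + 1) ω = Y t ω + noise t ω := fun t ω => by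
    rw [hxrec t ω]
  have hYieq : ∀ t i ω, Y t ω i = x (t + 1) ω i - noise t ω i := fun t i ω => by
    rw [hxY t ω]; simp
  have hYmeasF : ∀ t i, Measurable[F t] fun ω => Y t ω i := by
    intro t i
    have heq : (fun ω => Y t ω i) = fun ω => (∑ j, A i j * x t ω j) + u t ω * b i := by
      funext ω
      simp [hYdef, Matrix.mulVec, dotProduct]
    rw [heq]
    exact (Finset.measurable_sum _ fun j _ =>
      ((measurable_pi_apply j).comp (hxmeasF t)).const_mul _).add ((humeas t).mul_const _)
  have hYimeas : ∀ t i, Measurable fun ω => Y t ω i := fun t i =>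
    (hYmeasF t i).mono (hFle t) le_rfl
  have hYsq : ∀ t i, Integrable (fun ω => (Y t ω i) ^ 2) P := by
    intro t i
    have heq : (fun ω => (Y t ω i) ^ 2) = fun ω =>
        (x (t + 1) ω i) ^ 2 - 2 * (x (t + 1) ω i * noise t ω i) + (noise t ω i) ^ 2 :=
      funext fun ω => by rw [hYieq t i ω]; ring
    rw [heq]
    exact ((hxsq (t + 1) i).sub ((sq_int_mul (hxi (t + 1) i).aestronglyMeasurable
      (hni t i).aestronglyMeasurable (hxsq (t + 1) i) (hnsq t i)).const_mul 2)).add (hnsq t i)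
  -- zero-mean noise
  have hnzero : ∀ t j, ∫ ω, noise t ω j ∂P = 0 := by
    intro t j
    have h := hmean j
    rw [← hlaw t, integral_map (hnmeas t).aemeasurable
      (measurable_pi_apply j).aestronglyMeasurable] at h
    exact h
  -- vanishing cross terms
  have hcross : ∀ t i j, ∫ ω, Y t ω i * noise t ω j ∂P = 0 := by
    intro t i j
    have hind : IndepFun (fun ω => noise t ω j) (fun ω => Y t ω i) P := by
      rw [IndepFun_iff_Indep]
      refine indep_of_indep_of_le_right (indep_of_indep_of_le_left (hnindep t) ?_) ?_
      · exact Measurable.comap_le ((measurable_pi_apply j).comp (comap_measurable (noise t)))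
      · exact Measurable.comap_le (hYmeasF t i)
    have hmul := hind.integral_mul_eq_mul_integral (hni t j).aestronglyMeasurable
      (hYimeas t i).aestronglyMeasurable
    have h2 : (fun ω => Y t ω i * noise t ω j)
        = (fun ω => noise t ω j) * fun ω => Y t ω i := by
      funext ω; simp [mul_comm]
    rw [h2, hmul, hnzero t j, zero_mul]
  -- main inequality for a fixed lam
  have hmain : ∀ lam, 0 < lam → -Eff ≤ lam * Veff - dualVal γ μ x₀ (K lam) := by
    intro lam hlam
    obtain ⟨hKpsd, hKeq⟩ := hK lam hlam
    set m : ℝ := ∫ n, n ⬝ᵥ (K lam).mulVec n ∂μ with hm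
    have hquadn : ∀ t, ∫ ω, noise t ω ⬝ᵥ (K lam).mulVec (noise t ω) ∂P = m := by
      intro t
      rw [hm, ← hlaw t, integral_map (hnmeas t).aemeasurable
        (measurable_quad (K lam)).aestronglyMeasurable]
    have hIxx : ∀ (M : Matrix (Fin d) (Fin d) ℝ) t,
        Integrable (fun ω => x t ω ⬝ᵥ M.mulVec (x t ω)) P := fun M t =>
      integrable_bilin M _ _ fun i j => sq_int_mul (hxi t i).aestronglyMeasurable
        (hxi t j).aestronglyMeasurable (hxsq t i) (hxsq t j)
    have hIYY : ∀ t, Integrable (fun ω => Y t ω ⬝ᵥ (K lam).mulVec (Y t ω)) P := fun t =>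
      integrable_bilin _ _ _ fun i j => sq_int_mul (hYimeas t i).aestronglyMeasurable
        (hYimeas t j).aestronglyMeasurable (hYsq t i) (hYsq t j)
    have hIYn : ∀ t, Integrable (fun ω => Y t ω ⬝ᵥ (K lam).mulVec (noise t ω)) P := fun t =>
      integrable_bilin _ _ _ fun i j => sq_int_mul (hYimeas t i).aestronglyMeasurable
        (hni t j).aestronglyMeasurable (hYsq t i) (hnsq t j)
    have hInY : ∀ t, Integrable (fun ω => noise t ω ⬝ᵥ (K lam).mulVec (Y t ω)) P := fun t =>
      integrable_bilin _ _ _ fun i j => sq_int_mul (hni t i).aestronglyMeasurable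
        (hYimeas t j).aestronglyMeasurable (hnsq t i) (hYsq t j)
    have hInn : ∀ t, Integrable (fun ω => noise t ω ⬝ᵥ (K lam).mulVec (noise t ω)) P := fun t =>
      integrable_bilin _ _ _ fun i j => sq_int_mul (hni t i).aestronglyMeasurable
        (hni t j).aestronglyMeasurable (hnsq t i) (hnsq t j)
    -- one-step inequality
    have hstep : ∀ t, ∫ ω, x t ω ⬝ᵥ (K lam).mulVec (x t ω) ∂P
        ≤ (∫ ω, x t ω ⬝ᵥ Q.mulVec (x t ω) ∂P) + lam * (∫ ω, (u t ω) ^ 2 ∂P)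
          + γ * (∫ ω, x (t + 1) ω ⬝ᵥ (K lam).mulVec (x (t + 1) ω) ∂P) - γ * m := by
      intro t
      have hpt : ∀ ω, x t ω ⬝ᵥ (K lam).mulVec (x t ω)
          ≤ x t ω ⬝ᵥ Q.mulVec (x t ω) + lam * (u t ω) ^ 2
            + γ * (Y t ω ⬝ᵥ (K lam).mulVec (Y t ω)) := fun ω =>
        riccati_quad_le A Q (K lam) b γ lam hγ0 hlam hKpsd hKeq (x t ω) (u t ω)
      have hint1 : ∫ ω, x t ω ⬝ᵥ (K lam).mulVec (x t ω) ∂P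
          ≤ ∫ ω, (x t ω ⬝ᵥ Q.mulVec (x t ω) + lam * (u t ω) ^ 2
            + γ * (Y t ω ⬝ᵥ (K lam).mulVec (Y t ω))) ∂P :=
        integral_mono (hIxx (K lam) t)
          (((hIxx Q t).add ((huint t).const_mul lam)).add ((hIYY t).const_mul γ)) hpt
      have hi12 : Integrable (fun ω => x t ω ⬝ᵥ Q.mulVec (x t ω) + lam * (u t ω) ^ 2) P :=
        (hIxx Q t).add ((huint t).const_mul lam)
      have hi3 : Integrable (fun ω => γ * (Y t ω ⬝ᵥ (K lam).mulVec (Y t ω))) P :=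
        (hIYY t).const_mul γ
      have hi2 : Integrable (fun ω => lam * (u t ω) ^ 2) P := (huint t).const_mul lam
      rw [integral_add hi12 hi3, integral_add (hIxx Q t) hi2, integral_const_mul,
        integral_const_mul] at hint1
      -- decompose the (t+1) quadratic form
      have hsplit : (fun ω => x (t + 1) ω ⬝ᵥ (K lam).mulVec (x (t + 1) ω))
          = fun ω => Y t ω ⬝ᵥ (K lam).mulVec (Y t ω) + Y t ω ⬝ᵥ (K lam).mulVec (noise t ω)
            + noise t ω ⬝ᵥ (K lam).mulVec (Y t ω)
            + noise t ω ⬝ᵥ (K lam).mulVec (noise t ω) := by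
        have hgen : ∀ yv nv : Fin d → ℝ, (yv + nv) ⬝ᵥ (K lam).mulVec (yv + nv)
            = yv ⬝ᵥ (K lam).mulVec yv + yv ⬝ᵥ (K lam).mulVec nv
              + nv ⬝ᵥ (K lam).mulVec yv + nv ⬝ᵥ (K lam).mulVec nv := by
          intro yv nv
          simp only [Matrix.mulVec_add, dotProduct_add, add_dotProduct]
          ring
        funext ω
        rw [hxY t ω, hgen]
      have hYn0 : ∫ ω, Y t ω ⬝ᵥ (K lam).mulVec (noise t ω) ∂P = 0 := by
        rw [integral_bilin _ _ _ fun i j => sq_int_mul (hYimeas t i).aestronglyMeasurable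
          (hni t j).aestronglyMeasurable (hYsq t i) (hnsq t j)]
        exact Finset.sum_eq_zero fun i _ => Finset.sum_eq_zero fun j _ => by
          rw [hcross t i j, mul_zero]
      have hnY0 : ∫ ω, noise t ω ⬝ᵥ (K lam).mulVec (Y t ω) ∂P = 0 := by
        rw [integral_bilin _ _ _ fun i j => sq_int_mul (hni t i).aestronglyMeasurable
          (hYimeas t j).aestronglyMeasurable (hnsq t i) (hYsq t j)]
        refine Finset.sum_eq_zero fun i _ => Finset.sum_eq_zero fun j _ => ?_
        have : (fun ω => noise t ω i * Y t ω j) = fun ω => Y t ω j * noise t ω i := by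
          funext ω; ring
        rw [this, hcross t j i, mul_zero]
      have hdecomp : ∫ ω, x (t + 1) ω ⬝ᵥ (K lam).mulVec (x (t + 1) ω) ∂P
          = (∫ ω, Y t ω ⬝ᵥ (K lam).mulVec (Y t ω) ∂P) + m := by
        have hj12 : Integrable (fun ω => Y t ω ⬝ᵥ (K lam).mulVec (Y t ω)
            + Y t ω ⬝ᵥ (K lam).mulVec (noise t ω)) P := (hIYY t).add (hIYn t)
        have hj123 : Integrable (fun ω => Y t ω ⬝ᵥ (K lam).mulVec (Y t ω)
            + Y t ω ⬝ᵥ (K lam).mulVec (noise t ω)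
            + noise t ω ⬝ᵥ (K lam).mulVec (Y t ω)) P := hj12.add (hInY t)
        rw [hsplit, integral_add hj123 (hInn t), integral_add hj12 (hInY t),
          integral_add (hIYY t) (hIYn t), hYn0, hnY0, hquadn t]
        ring
      have hγle : 0 ≤ γ := hγ0.le
      nlinarith [hint1, hdecomp]
    -- telescoping
    have htel : ∀ T, (∫ ω, x 0 ω ⬝ᵥ (K lam).mulVec (x 0 ω) ∂P)
        ≤ (∑ t ∈ Finset.range T, (γ ^ t * (∫ ω, x t ω ⬝ᵥ Q.mulVec (x t ω) ∂P)
            + lam * (γ ^ t * (∫ ω, (u t ω) ^ 2 ∂P)) - γ ^ (t + 1) * m))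
          + γ ^ T * (∫ ω, x T ω ⬝ᵥ (K lam).mulVec (x T ω) ∂P) := by
      intro T
      induction T with
      | zero => simp
      | succ T ih =>
        refine ih.trans ?_
        rw [Finset.sum_range_succ]
        have h := mul_le_mul_of_nonneg_left (hstep T) (pow_nonneg hγ0.le T)
        have hexp : γ ^ T * ((∫ ω, x T ω ⬝ᵥ Q.mulVec (x T ω) ∂P)
            + lam * (∫ ω, (u T ω) ^ 2 ∂P)
            + γ * (∫ ω, x (T + 1) ω ⬝ᵥ (K lam).mulVec (x (T + 1) ω) ∂P) - γ * m)
            = γ ^ T * (∫ ω, x T ω ⬝ᵥ Q.mulVec (x T ω) ∂P)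
              + lam * (γ ^ T * (∫ ω, (u T ω) ^ 2 ∂P)) - γ ^ (T + 1) * m
              + γ ^ (T + 1) * (∫ ω, x (T + 1) ω ⬝ᵥ (K lam).mulVec (x (T + 1) ω) ∂P) := by
          ring
        rw [hexp] at h
        linarith [h]
    -- limits
    have hT1 : Tendsto
        (fun T => ∑ t ∈ Finset.range T, γ ^ t * ∫ ω, x t ω ⬝ᵥ Q.mulVec (x t ω) ∂P)
        atTop (nhds Eff) := hEsum.hasSum.tendsto_sum_nat
    have hT2 : Tendsto
        (fun T => ∑ t ∈ Finset.range T, lam * (γ ^ t * ∫ ω, (u t ω) ^ 2 ∂P))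
        atTop (nhds (lam * Veff)) := (hVsum.hasSum.mul_left lam).tendsto_sum_nat
    have h3 : HasSum (fun t : ℕ => γ ^ (t + 1) * m) (γ * m * (1 - γ)⁻¹) := by
      have hg := (hasSum_geometric_of_lt_one hγ0.le hγ1).mul_left (γ * m)
      have : (fun t : ℕ => γ * m * γ ^ t) = fun t : ℕ => γ ^ (t + 1) * m := by
        funext t; ring
      rwa [this] at hg
    have hT3 : Tendsto (fun T => ∑ t ∈ Finset.range T, γ ^ (t + 1) * m)
        atTop (nhds (γ * m * (1 - γ)⁻¹)) := h3.tendsto_sum_nat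
    have hT4 := htrans lam hlam
    have hlim : Tendsto (fun T =>
        (∑ t ∈ Finset.range T, (γ ^ t * (∫ ω, x t ω ⬝ᵥ Q.mulVec (x t ω) ∂P)
          + lam * (γ ^ t * (∫ ω, (u t ω) ^ 2 ∂P)) - γ ^ (t + 1) * m))
        + γ ^ T * (∫ ω, x T ω ⬝ᵥ (K lam).mulVec (x T ω) ∂P))
        atTop (nhds (Eff + lam * Veff - γ * m * (1 - γ)⁻¹ + 0)) := by
      refine Tendsto.add ?_ hT4
      have hsplit2 : ∀ T, (∑ t ∈ Finset.range T,
          (γ ^ t * (∫ ω, x t ω ⬝ᵥ Q.mulVec (x t ω) ∂P)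
            + lam * (γ ^ t * (∫ ω, (u t ω) ^ 2 ∂P)) - γ ^ (t + 1) * m))
          = (∑ t ∈ Finset.range T, γ ^ t * (∫ ω, x t ω ⬝ᵥ Q.mulVec (x t ω) ∂P))
            + (∑ t ∈ Finset.range T, lam * (γ ^ t * (∫ ω, (u t ω) ^ 2 ∂P)))
            - (∑ t ∈ Finset.range T, γ ^ (t + 1) * m) := by
        intro T
        rw [Finset.sum_sub_distrib, Finset.sum_add_distrib]
      simp only [hsplit2]
      exact (hT1.add hT2).sub hT3
    have hk0le : (∫ ω, x 0 ω ⬝ᵥ (K lam).mulVec (x 0 ω) ∂P)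
        ≤ Eff + lam * Veff - γ * m * (1 - γ)⁻¹ + 0 := ge_of_tendsto' hlim htel
    have hk0 : (∫ ω, x 0 ω ⬝ᵥ (K lam).mulVec (x 0 ω) ∂P) = x₀ ⬝ᵥ (K lam).mulVec x₀ := by
      rw [hx0]
      simp
    rw [dualVal]
    have hInv : γ / (1 - γ) * m = γ * m * (1 - γ)⁻¹ := by
      rw [div_eq_mul_inv]; ring
    rw [← hm]
    linarith [hk0le, hk0 ▸ hk0le]
  refine ⟨fun lam hlam => hmain lam hlam, ?_⟩
  haveI : Nonempty (Set.Ioi (0 : ℝ)) := ⟨⟨1, Set.mem_Ioi.mpr one_pos⟩⟩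
  refine neg_le_neg (ciSup_le fun lam => ?_)
  have h := hmain lam.1 (Set.mem_Ioi.mp lam.2)
  linarith

end
end

section
/- Assume every complex eigenvalue of F has modulus strictly less than 1. Then (1) along the equilibrium trajectory x_{t+1} = F x_t with x_0 = x₀ and u^i_t = −p_iᵀx_t, player i's cost equals (1/2) x₀ᵀK^i x₀ for i ∈ {1,2}; and (2) the feedback pair is a Nash equilibrium: for each i ∈ {1,2} and every deviating control sequence (ũ_t)_{t≥0} of real numbers with resulting state trajectory x̃_{t+1} = (A − b^{−i} p_{−i}ᵀ) x̃_t + b^i ũ_t, x̃₀ = x₀, satisfying γ^T x̃_TᵀK^i x̃_T → 0 as T → ∞, one has (1/2) Σ_{t=0}^∞ γ^t ( x̃_tᵀQ_i x̃_t + r ũ_t² ) ≥ (1/2) x₀ᵀK^i x₀, where the left side is a series of nonnegative terms (possibly +∞). -/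
open Matrix Filter

noncomputable section

section auxLQG
variable {d : ℕ}

lemma dot_symm (K : Matrix (Fin d) (Fin d) ℝ) (hK : Kᵀ = K) (x y : Fin d → ℝ) :
    x ⬝ᵥ K.mulVec y = y ⬝ᵥ K.mulVec x := by
  rw [dotProduct_mulVec, ← hK, vecMul_transpose, dotProduct_comm, hK]

lemma quad_expand (K : Matrix (Fin d) (Fin d) ℝ) (hK : Kᵀ = K) (y b : Fin d → ℝ) (t : ℝ) :
    (y + t • b) ⬝ᵥ K.mulVec (y + t • b) =
      y ⬝ᵥ K.mulVec y + 2 * t * (b ⬝ᵥ K.mulVec y) + t ^ 2 * (b ⬝ᵥ K.mulVec b) := by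
  simp only [mulVec_add, mulVec_smul, dotProduct_add, add_dotProduct, dotProduct_smul,
    smul_dotProduct, smul_eq_mul]
  rw [dot_symm K hK y b]
  ring

lemma vecMulVec_mulVec' (w v x : Fin d → ℝ) :
    (vecMulVec w v).mulVec x = (v ⬝ᵥ x) • w := by
  ext i
  simp only [vecMulVec_apply, mulVec, dotProduct, Pi.smul_apply, smul_eq_mul,
    Finset.mul_sum, Finset.sum_mul]
  exact Finset.sum_congr rfl fun k _ => by ring

lemma quad_ric (F K Q : Matrix (Fin d) (Fin d) ℝ) (p : Fin d → ℝ) (r γ : ℝ)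
    (h : K = γ • (Fᵀ * K * F) + r • vecMulVec p p + Q) (x : Fin d → ℝ) :
    x ⬝ᵥ K.mulVec x =
      γ * (F.mulVec x ⬝ᵥ K.mulVec (F.mulVec x)) + r * (p ⬝ᵥ x) ^ 2 + x ⬝ᵥ Q.mulVec x := by
  conv_lhs => rw [h]
  simp only [add_mulVec, smul_mulVec, dotProduct_add, dotProduct_smul, smul_eq_mul,
    vecMulVec_mulVec']
  congr 2
  · congr 1
    rw [← mulVec_mulVec, ← mulVec_mulVec, dotProduct_mulVec x Fᵀ, vecMul_transpose]
  · rw [dotProduct_comm x p]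
    ring

lemma key_step (A : Matrix (Fin d) (Fin d) ℝ) (bi bj p q : Fin d → ℝ)
    (Q K : Matrix (Fin d) (Fin d) ℝ) (hK : Kᵀ = K) (r γ : ℝ)
    (hRic1 : γ • Matrix.vecMul (Matrix.vecMul bi K) A =
      (r + γ * (bi ⬝ᵥ K.mulVec bi)) • p + (γ * (bi ⬝ᵥ K.mulVec bj)) • q)
    (hRic2 : K = γ • ((A - vecMulVec bj q - vecMulVec bi p)ᵀ * K *
        (A - vecMulVec bj q - vecMulVec bi p)) + r • vecMulVec p p + Q)
    (x : Fin d → ℝ) (u : ℝ) :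
    x ⬝ᵥ Q.mulVec x + r * u ^ 2
      + γ * (((A - vecMulVec bj q).mulVec x + u • bi) ⬝ᵥ
          K.mulVec ((A - vecMulVec bj q).mulVec x + u • bi))
      - x ⬝ᵥ K.mulVec x
    = (r + γ * (bi ⬝ᵥ K.mulVec bi)) * (u + p ⬝ᵥ x) ^ 2 := by
  set G := A - vecMulVec bj q with hG
  have hF : (A - vecMulVec bj q - vecMulVec bi p).mulVec x
      = G.mulVec x + (-(p ⬝ᵥ x)) • bi := by
    rw [sub_mulVec, vecMulVec_mulVec', neg_smul, ← sub_eq_add_neg, hG]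
  have hxK := quad_ric _ _ _ _ _ _ hRic2 x
  rw [hF, quad_expand K hK (G.mulVec x) bi (-(p ⬝ᵥ x))] at hxK
  rw [quad_expand K hK (G.mulVec x) bi u]
  have h1 := congrArg (fun v => v ⬝ᵥ x) hRic1
  simp only [smul_dotProduct, add_dotProduct, smul_eq_mul] at h1
  have h2 : Matrix.vecMul (Matrix.vecMul bi K) A ⬝ᵥ x = bi ⬝ᵥ K.mulVec (A.mulVec x) := by
    rw [← dotProduct_mulVec, ← dotProduct_mulVec]
  have h3 : bi ⬝ᵥ K.mulVec (G.mulVec x)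
      = bi ⬝ᵥ K.mulVec (A.mulVec x) - (q ⬝ᵥ x) * (bi ⬝ᵥ K.mulVec bj) := by
    rw [hG, sub_mulVec, vecMulVec_mulVec', mulVec_sub, mulVec_smul, dotProduct_sub,
      dotProduct_smul, smul_eq_mul]
  have hm : γ * (bi ⬝ᵥ K.mulVec (G.mulVec x))
      = (r + γ * (bi ⬝ᵥ K.mulVec bi)) * (p ⬝ᵥ x) := by
    linear_combination γ * h3 - γ * h2 + h1
  linear_combination (-1 : ℝ) * hxK + (2 * (u + p ⬝ᵥ x)) * hm

end auxLQG


section stability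

attribute [local instance] Matrix.linftyOpNormedRing Matrix.linftyOpNormedAlgebra

lemma entry_tendsto_zero {d : ℕ} (hd : 1 ≤ d) (M : Matrix (Fin d) (Fin d) ℝ)
    (h : ∀ z ∈ spectrum ℂ (M.map Complex.ofReal), ‖z‖ < 1) (i j : Fin d) :
    Tendsto (fun n => (M ^ n) i j) atTop (nhds 0) := by
  haveI : NeZero d := ⟨by omega⟩
  haveI : CompleteSpace (Matrix (Fin d) (Fin d) ℂ) := FiniteDimensional.complete ℂ _
  set a : Matrix (Fin d) (Fin d) ℂ := M.map Complex.ofReal with ha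
  have hrad : spectralRadius ℂ a < 1 := by
    have := spectrum.spectralRadius_lt_of_forall_lt (a := a) (r := 1)
      (fun z hz => by simpa [← NNReal.coe_lt_coe] using h z hz)
    simpa using this
  obtain ⟨ρ, hρa, hρ1⟩ := ENNReal.lt_iff_exists_nnreal_btwn.mp hrad
  have hgel := spectrum.pow_nnnorm_pow_one_div_tendsto_nhds_spectralRadius a
  have hev : ∀ᶠ n : ℕ in atTop, (‖a ^ n‖₊ : ENNReal) ^ (1 / (n : ℝ)) < ρ :=
    hgel.eventually_lt_const hρa
  have hbound : ∀ᶠ n : ℕ in atTop, ‖a ^ n‖ ≤ (ρ : ℝ) ^ n := by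
    filter_upwards [hev, eventually_ge_atTop 1] with n hn hn1
    have hn0 : (n : ℝ) ≠ 0 := by positivity
    have h2 : (((‖a ^ n‖₊ : ENNReal) ^ (1 / (n : ℝ))) ^ (n : ℝ)) ≤ ((ρ : ENNReal) ^ (n : ℝ)) :=
      ENNReal.rpow_le_rpow hn.le (by positivity)
    rw [← ENNReal.rpow_mul, one_div, inv_mul_cancel₀ hn0, ENNReal.rpow_one,
      ENNReal.rpow_natCast] at h2
    have h3 : ‖a ^ n‖₊ ≤ ρ ^ n := by
      rw [← ENNReal.coe_pow] at h2
      exact_mod_cast h2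
    calc ‖a ^ n‖ = ((‖a ^ n‖₊ : ℝ)) := rfl
      _ ≤ ((ρ ^ n : NNReal) : ℝ) := by exact_mod_cast h3
      _ = (ρ : ℝ) ^ n := by push_cast; ring
  have hnorm0 : Tendsto (fun n => ‖a ^ n‖) atTop (nhds 0) := by
    refine squeeze_zero' (Eventually.of_forall fun n => norm_nonneg _) hbound ?_
    exact tendsto_pow_atTop_nhds_zero_of_lt_one ρ.coe_nonneg (by exact_mod_cast hρ1)
  have hentry : ∀ n : ℕ, |(M ^ n) i j| ≤ ‖a ^ n‖ := by
    intro n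
    have hpow : a ^ n = (M ^ n).map Complex.ofReal := by
      rw [ha]
      have := map_pow (Complex.ofRealHom.mapMatrix (m := Fin d)) M n
      exact this.symm
    have h1 : (‖(a ^ n) i j‖₊ : NNReal) ≤ ‖a ^ n‖₊ := by
      rw [Matrix.linfty_opNNNorm_def]
      exact le_trans (Finset.single_le_sum (f := fun k => ‖(a ^ n) i k‖₊)
        (fun _ _ => zero_le) (Finset.mem_univ j))
        (Finset.le_sup (f := fun k => ∑ l, ‖(a ^ n) k l‖₊) (Finset.mem_univ i))
    have h2 : ‖(a ^ n) i j‖ ≤ ‖a ^ n‖ := h1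
    have h3 : (a ^ n) i j = (((M ^ n) i j : ℝ) : ℂ) := by rw [hpow]; rfl
    rw [h3, Complex.norm_real] at h2
    exact h2
  exact squeeze_zero (fun n => abs_nonneg _) hentry hnorm0 |>.congr' (by rfl) |> fun H =>
    (tendsto_zero_iff_abs_tendsto_zero _).mpr H

end stability


/-- The closed-loop matrix `F = A − b¹p₁ᵀ − b²p₂ᵀ` of the feedback Nash equilibrium. -/
def gameF {d : ℕ} (A : Matrix (Fin d) (Fin d) ℝ) (b p : Fin 2 → Fin d → ℝ) :
    Matrix (Fin d) (Fin d) ℝ :=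
  A - vecMulVec (b 0) (p 0) - vecMulVec (b 1) (p 1)

/-- The coupled Riccati relations of the two-player linear–quadratic dynamic game:
`γ (bⁱ)ᵀKⁱA = (r + γ(bⁱ)ᵀKⁱbⁱ) pᵢᵀ + γ(bⁱ)ᵀKⁱb⁻ⁱ p₋ᵢᵀ` and
`Kⁱ = γ FᵀKⁱF + r pᵢpᵢᵀ + Qᵢ`, with each `Kⁱ` symmetric positive semidefinite. -/
def coupledRiccati {d : ℕ} (A : Matrix (Fin d) (Fin d) ℝ) (b : Fin 2 → Fin d → ℝ)
    (Q : Fin 2 → Matrix (Fin d) (Fin d) ℝ) (r γ : ℝ)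
    (p : Fin 2 → Fin d → ℝ) (K : Fin 2 → Matrix (Fin d) (Fin d) ℝ) : Prop :=
  (∀ i, (K i).PosSemidef) ∧
  (∀ i j, j ≠ i →
    γ • Matrix.vecMul (Matrix.vecMul (b i) (K i)) A =
      (r + γ * (b i ⬝ᵥ (K i).mulVec (b i))) • p i +
        (γ * (b i ⬝ᵥ (K i).mulVec (b j))) • p j) ∧
  (∀ i, K i = γ • ((gameF A b p)ᵀ * K i * gameF A b p) + r • vecMulVec (p i) (p i) + Q i)

/-- Feedback Nash equilibrium of the two-player LQ dynamic game: along the equilibrium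
trajectory `x_{t+1} = F x_t`, player `i`'s cost equals `(1/2) x₀ᵀKⁱx₀`; and no player can
improve by a unilateral deviation (with the transversality condition
`γ^T x̃_TᵀKⁱx̃_T → 0`). -/
theorem feedback_nash_equilibrium
    (d : ℕ) (hd : 1 ≤ d)
    (A : Matrix (Fin d) (Fin d) ℝ) (b : Fin 2 → Fin d → ℝ)
    (Q : Fin 2 → Matrix (Fin d) (Fin d) ℝ) (hQ : ∀ i, (Q i).PosSemidef)
    (r : ℝ) (hr : 0 < r)
    (γ : ℝ) (hγ : γ ∈ Set.Ioo (0 : ℝ) 1)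
    (x₀ : Fin d → ℝ)
    (p : Fin 2 → Fin d → ℝ) (K : Fin 2 → Matrix (Fin d) (Fin d) ℝ)
    (hcr : coupledRiccati A b Q r γ p K)
    (hstable : ∀ z ∈ spectrum ℂ ((gameF A b p).map Complex.ofReal), ‖z‖ < 1) :
    -- (1) the equilibrium cost of each player
    (∀ i : Fin 2,
      HasSum
        (fun t : ℕ => (1 / 2 : ℝ) * γ ^ t *
          (((gameF A b p) ^ t).mulVec x₀ ⬝ᵥ (Q i).mulVec (((gameF A b p) ^ t).mulVec x₀) +
            r * (p i ⬝ᵥ ((gameF A b p) ^ t).mulVec x₀) ^ 2))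
        ((1 / 2 : ℝ) * (x₀ ⬝ᵥ (K i).mulVec x₀))) ∧
    -- (2) Nash property: no unilateral deviation can lower a player's cost
    (∀ i j : Fin 2, j ≠ i →
      ∀ (ut : ℕ → ℝ) (xt : ℕ → Fin d → ℝ),
        xt 0 = x₀ →
        (∀ t, xt (t + 1) = (A - vecMulVec (b j) (p j)).mulVec (xt t) + ut t • b i) →
        Tendsto (fun T => γ ^ T * (xt T ⬝ᵥ (K i).mulVec (xt T))) atTop (nhds 0) →
        ENNReal.ofReal ((1 / 2 : ℝ) * (x₀ ⬝ᵥ (K i).mulVec x₀)) ≤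
          ∑' t : ℕ, ENNReal.ofReal
            ((1 / 2 : ℝ) * γ ^ t *
              (xt t ⬝ᵥ (Q i).mulVec (xt t) + r * (ut t) ^ 2))) := by
  classical
  obtain ⟨hKpsd, hRic1, hRic2⟩ := hcr
  obtain ⟨hγ0, hγ1⟩ := hγ
  set F := gameF A b p with hFdef
  have hKsym : ∀ i : Fin 2, (K i)ᵀ = K i := fun i => by
    have h := (hKpsd i).isHermitian
    rwa [Matrix.IsHermitian, conjTranspose_eq_transpose_of_trivial] at h
  have hQnn : ∀ (i : Fin 2) (v : Fin d → ℝ), 0 ≤ v ⬝ᵥ (Q i).mulVec v := fun i v => by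
    simpa using (hQ i).dotProduct_mulVec_nonneg v
  have hKnn : ∀ (i : Fin 2) (v : Fin d → ℝ), 0 ≤ v ⬝ᵥ (K i).mulVec v := fun i v => by
    simpa using (hKpsd i).dotProduct_mulVec_nonneg v
  -- stability consequences
  have hFx : Tendsto (fun n => (F ^ n).mulVec x₀) atTop (nhds 0) := by
    have hFm : Tendsto (fun n => F ^ n) atTop (nhds (0 : Matrix (Fin d) (Fin d) ℝ)) := by
      refine tendsto_pi_nhds.mpr fun i => ?_
      refine tendsto_pi_nhds.mpr fun j => ?_
      simpa using entry_tendsto_zero hd F hstable i j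
    have hc : Continuous fun M : Matrix (Fin d) (Fin d) ℝ => M.mulVec x₀ :=
      continuous_id.matrix_mulVec continuous_const
    have := (hc.tendsto 0).comp hFm
    simpa [Function.comp_def, Matrix.zero_mulVec] using this
  have hquad0 : ∀ i : Fin 2, Tendsto
      (fun n => γ ^ n * ((F ^ n).mulVec x₀ ⬝ᵥ (K i).mulVec ((F ^ n).mulVec x₀)))
      atTop (nhds 0) := by
    intro i
    have hc : Continuous fun v : Fin d → ℝ => v ⬝ᵥ (K i).mulVec v :=
      continuous_id.dotProduct (continuous_const.matrix_mulVec continuous_id)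
    have h1 : Tendsto (fun n => (F ^ n).mulVec x₀ ⬝ᵥ (K i).mulVec ((F ^ n).mulVec x₀))
        atTop (nhds 0) := by
      have := (hc.tendsto 0).comp hFx
      simpa [Function.comp_def, Matrix.mulVec_zero] using this
    have h2 : Tendsto (fun n : ℕ => γ ^ n) atTop (nhds (0 : ℝ)) :=
      tendsto_pow_atTop_nhds_zero_of_lt_one hγ0.le hγ1
    simpa using h2.mul h1
  constructor
  · -- part (1)
    intro i
    set x : ℕ → Fin d → ℝ := fun t => (F ^ t).mulVec x₀ with hx
    set a : ℕ → ℝ := fun t => x t ⬝ᵥ (K i).mulVec (x t) with ha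
    set c : ℕ → ℝ := fun t => x t ⬝ᵥ (Q i).mulVec (x t) + r * (p i ⬝ᵥ x t) ^ 2 with hc
    have hxsucc : ∀ t, x (t + 1) = F.mulVec (x t) := fun t => by
      simp only [hx, pow_succ', Matrix.mulVec_mulVec]
    have hstep : ∀ t, a t = γ * a (t + 1) + c t := by
      intro t
      have hqr := quad_ric F (K i) (Q i) (p i) r γ (hRic2 i) (x t)
      show x t ⬝ᵥ (K i).mulVec (x t) = γ * (x (t+1) ⬝ᵥ (K i).mulVec (x (t+1)))
        + (x t ⬝ᵥ (Q i).mulVec (x t) + r * (p i ⬝ᵥ x t) ^ 2)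
      rw [hxsucc t, hqr]; ring
    have hsum : ∀ T, ∑ t ∈ Finset.range T, γ ^ t * c t = a 0 - γ ^ T * a T := by
      intro T
      have h := Finset.sum_range_sub' (f := fun t => γ ^ t * a t) T
      simp only [pow_zero, one_mul] at h
      rw [← h]
      exact Finset.sum_congr rfl fun t _ => by rw [hstep t]; ring
    have hnn : ∀ t, 0 ≤ (1 / 2 : ℝ) * γ ^ t * (x t ⬝ᵥ (Q i).mulVec (x t)
        + r * (p i ⬝ᵥ x t) ^ 2) := by
      intro t
      have h1 := hQnn i (x t)
      have h2 : 0 ≤ r * (p i ⬝ᵥ x t) ^ 2 := by positivity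
      have h3 : (0:ℝ) ≤ γ ^ t := by positivity
      nlinarith
    rw [hasSum_iff_tendsto_nat_of_nonneg hnn]
    have h0 : a 0 = x₀ ⬝ᵥ (K i).mulVec x₀ := by simp [ha, hx]
    have htend : Tendsto (fun T => (1 / 2 : ℝ) * (a 0 - γ ^ T * a T)) atTop
        (nhds ((1 / 2 : ℝ) * (x₀ ⬝ᵥ (K i).mulVec x₀))) := by
      rw [← h0]
      have h1 := (tendsto_const_nhds (x := a 0) (f := atTop (α := ℕ))).sub (hquad0 i)
      have h2 := Tendsto.const_mul (1 / 2 : ℝ) h1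
      simpa only [sub_zero, mul_zero] using h2
    refine htend.congr fun T => ?_
    rw [← hsum T, Finset.mul_sum]
    exact Finset.sum_congr rfl fun t _ => by rw [hc]; ring
  · -- part (2)
    intro i j hji ut xt hx0 hdyn htrans
    have hGF : F = A - vecMulVec (b j) (p j) - vecMulVec (b i) (p i) := by
      rw [hFdef]
      have hval : (i.val = 0 ∧ j.val = 1) ∨ (i.val = 1 ∧ j.val = 0) := by
        have hi : i.val < 2 := i.isLt
        have hj : j.val < 2 := j.isLt
        have hne : j.val ≠ i.val := fun h => hji (Fin.ext h)
        omega
      rcases hval with ⟨h1, h2⟩ | ⟨h1, h2⟩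
      · have hi0 : i = 0 := Fin.ext h1
        have hj1 : j = 1 := Fin.ext h2
        subst hi0; subst hj1
        rw [gameF, sub_sub, sub_sub, add_comm]
      · have hi1 : i = 1 := Fin.ext h1
        have hj0 : j = 0 := Fin.ext h2
        subst hi1; subst hj0
        rfl
    set at' : ℕ → ℝ := fun t => xt t ⬝ᵥ (K i).mulVec (xt t) with hat
    have hkey : ∀ t, γ ^ t * at' t - γ ^ (t + 1) * at' (t + 1) ≤
        γ ^ t * (xt t ⬝ᵥ (Q i).mulVec (xt t) + r * ut t ^ 2) := by
      intro t
      have hq := quad_ric F (K i) (Q i) (p i) r γ (hRic2 i)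
      have hks := key_step A (b i) (b j) (p i) (p j) (Q i) (K i) (hKsym i) r γ
        (hRic1 i j hji) (by rw [← hGF]; exact hRic2 i) (xt t) (ut t)
      have hnext : (A - vecMulVec (b j) (p j)).mulVec (xt t) + ut t • b i = xt (t + 1) :=
        (hdyn t).symm
      rw [hnext] at hks
      have hc0 : 0 ≤ b i ⬝ᵥ (K i).mulVec (b i) := hKnn i (b i)
      have hsq : 0 ≤ (r + γ * (b i ⬝ᵥ (K i).mulVec (b i))) * (ut t + p i ⬝ᵥ xt t) ^ 2 := by
        have : 0 < r + γ * (b i ⬝ᵥ (K i).mulVec (b i)) := by nlinarith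
        positivity
      have hγt : (0:ℝ) < γ ^ t := by positivity
      have hineq : xt t ⬝ᵥ (K i).mulVec (xt t) - γ * (xt (t+1) ⬝ᵥ (K i).mulVec (xt (t+1)))
          ≤ xt t ⬝ᵥ (Q i).mulVec (xt t) + r * ut t ^ 2 := by nlinarith [hks, hsq]
      have := mul_le_mul_of_nonneg_left hineq hγt.le
      calc γ ^ t * at' t - γ ^ (t + 1) * at' (t + 1)
          = γ ^ t * (xt t ⬝ᵥ (K i).mulVec (xt t)
            - γ * (xt (t+1) ⬝ᵥ (K i).mulVec (xt (t+1)))) := by rw [hat]; ring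
        _ ≤ _ := this
    have hpsum : ∀ T, (1 / 2 : ℝ) * (at' 0 - γ ^ T * at' T) ≤
        ∑ t ∈ Finset.range T, (1 / 2 : ℝ) * γ ^ t *
          (xt t ⬝ᵥ (Q i).mulVec (xt t) + r * ut t ^ 2) := by
      intro T
      have h1 : at' 0 - γ ^ T * at' T = ∑ t ∈ Finset.range T,
          (γ ^ t * at' t - γ ^ (t + 1) * at' (t + 1)) := by
        rw [Finset.sum_range_sub' (f := fun t => γ ^ t * at' t) T]
        simp
      have h2 : ∑ t ∈ Finset.range T, (γ ^ t * at' t - γ ^ (t + 1) * at' (t + 1)) ≤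
          ∑ t ∈ Finset.range T, γ ^ t *
            (xt t ⬝ᵥ (Q i).mulVec (xt t) + r * ut t ^ 2) :=
        Finset.sum_le_sum fun t _ => hkey t
      calc (1 / 2 : ℝ) * (at' 0 - γ ^ T * at' T)
          ≤ (1 / 2 : ℝ) * ∑ t ∈ Finset.range T, γ ^ t *
            (xt t ⬝ᵥ (Q i).mulVec (xt t) + r * ut t ^ 2) := by
            rw [h1]; linarith [h2]
        _ = _ := by rw [Finset.mul_sum]; exact Finset.sum_congr rfl fun t _ => by ring
    have hterm_nn : ∀ t, 0 ≤ (1 / 2 : ℝ) * γ ^ t *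
        (xt t ⬝ᵥ (Q i).mulVec (xt t) + r * ut t ^ 2) := by
      intro t
      have h1 := hQnn i (xt t)
      have h2 : 0 ≤ r * ut t ^ 2 := by positivity
      have h3 : (0:ℝ) ≤ γ ^ t := by positivity
      nlinarith
    have hle : ∀ T, ENNReal.ofReal ((1 / 2 : ℝ) * (at' 0 - γ ^ T * at' T)) ≤
        ∑' t : ℕ, ENNReal.ofReal ((1 / 2 : ℝ) * γ ^ t *
          (xt t ⬝ᵥ (Q i).mulVec (xt t) + r * ut t ^ 2)) := by
      intro T
      refine le_trans (ENNReal.ofReal_le_ofReal (hpsum T)) ?_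
      rw [ENNReal.ofReal_sum_of_nonneg fun t _ => hterm_nn t]
      exact ENNReal.sum_le_tsum _
    have htendE : Tendsto (fun T => ENNReal.ofReal ((1 / 2 : ℝ) * (at' 0 - γ ^ T * at' T)))
        atTop (nhds (ENNReal.ofReal ((1 / 2 : ℝ) * (x₀ ⬝ᵥ (K i).mulVec x₀)))) := by
      have h0 : at' 0 = x₀ ⬝ᵥ (K i).mulVec x₀ := by rw [hat]; simp [hx0]
      have hreal : Tendsto (fun T => (1 / 2 : ℝ) * (at' 0 - γ ^ T * at' T)) atTop
          (nhds ((1 / 2 : ℝ) * (x₀ ⬝ᵥ (K i).mulVec x₀))) := by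
        rw [← h0]
        have h1 := (tendsto_const_nhds (x := at' 0) (f := atTop (α := ℕ))).sub htrans
        have h2 := Tendsto.const_mul (1 / 2 : ℝ) h1
        simpa only [sub_zero, mul_zero] using h2
      exact (ENNReal.continuous_ofReal.tendsto _).comp hreal
    exact le_of_tendsto htendE (Eventually.of_forall hle)

end
end
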